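/- For any graph G, the set Short(𝒞(G)) of short characteristic covectors of the cut lattice consists precisely of the orientation covectors for 𝒞(G): a characteristic covector χ for 𝒞(G) is short if and only if χ is the restriction to 𝒞(G) of χ_𝒪 for some orientation 𝒪 of G. -/

import Mathlib

set_option linter.unusedSectionVars false

open Matrix BigOperators

namespace Greene

/-- A rational number is an integer. -/
def isInt (q : ℚ) : Prop := ∃ m : ℤ, q = (m : ℚ)

section LatticeDefs

variable {ι : Type} [Fintype ι] [DecidableEq ι]
variable {ι' : Type} [Fintype ι'] [DecidableEq ι']

/-- The bilinear form on `ι → ℚ` with (integral) Gram matrix `B`. -/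
def qform (B : Matrix ι ι ℤ) (x y : ι → ℚ) : ℚ :=
  x ⬝ᵥ ((B.map (Int.cast : ℤ → ℚ)) *ᵥ y)

/-- The set of integer vectors: the standard lattice inside `ι → ℚ`. -/
def intVecs (ι : Type) [Fintype ι] [DecidableEq ι] : Set (ι → ℚ) :=
  {x | ∀ i, isInt (x i)}

lemma qform_zero_left (B : Matrix ι ι ℤ) (y : ι → ℚ) : qform B 0 y = 0 :=
  zero_dotProduct _

lemma qform_add_left (B : Matrix ι ι ℤ) (x x' y : ι → ℚ) :
    qform B (x + x') y = qform B x y + qform B x' y := add_dotProduct _ _ _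

lemma qform_neg_left (B : Matrix ι ι ℤ) (x y : ι → ℚ) :
    qform B (-x) y = -qform B x y := neg_dotProduct _ _

/-- The dual lattice `S* = {x ∈ span_ℚ S | ⟨x,y⟩ ∈ ℤ for all y ∈ S}`. -/
def dualOf (B : Matrix ι ι ℤ) (S : Set (ι → ℚ)) : AddSubgroup (ι → ℚ) where
  carrier := {x | x ∈ Submodule.span ℚ S ∧ ∀ y ∈ S, isInt (qform B x y)}
  zero_mem' := ⟨Submodule.zero_mem _, fun y _ => ⟨0, by simp [qform_zero_left]⟩⟩
  add_mem' := by
    intro a b ha hb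
    refine ⟨Submodule.add_mem _ ha.1 hb.1, fun y hy => ?_⟩
    obtain ⟨m, hm⟩ := ha.2 y hy
    obtain ⟨m', hm'⟩ := hb.2 y hy
    exact ⟨m + m', by rw [qform_add_left, hm, hm']; push_cast; ring⟩
  neg_mem' := by
    intro a ha
    refine ⟨Submodule.neg_mem _ ha.1, fun y hy => ?_⟩
    obtain ⟨m, hm⟩ := ha.2 y hy
    exact ⟨-m, by rw [qform_neg_left, hm]; push_cast; ring⟩

/-- Characteristic covectors: `χ ∈ S*` with `⟨χ,y⟩ ≡ ⟨y,y⟩ (mod 2)` for all `y ∈ S`. -/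
def CharOf (B : Matrix ι ι ℤ) (S : Set (ι → ℚ)) : Set (ι → ℚ) :=
  {χ | χ ∈ dualOf B S ∧ ∀ y ∈ S, ∃ m : ℤ, qform B χ y - qform B y y = 2 * (m : ℚ)}

/-- Two covectors are in the same class mod `2S`. -/
def SameClass (S : Set (ι → ℚ)) (χ χ' : ι → ℚ) : Prop :=
  ∃ y ∈ S, χ' = χ + (2 : ℚ) • y

/-- Short characteristic covectors: minimal norm in their class mod `2S`. -/
def ShortOf (B : Matrix ι ι ℤ) (S : Set (ι → ℚ)) : Set (ι → ℚ) :=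
  {χ | χ ∈ CharOf B S ∧ ∀ χ' ∈ CharOf B S, SameClass S χ χ' → qform B χ χ ≤ qform B χ' χ'}

/-- Rank of a lattice: dimension of its rational span. -/
noncomputable def rkOf (S : Set (ι → ℚ)) : ℕ := Module.finrank ℚ (Submodule.span ℚ S)

/-- The lattice `S` sitting inside its dual. -/
def latIn (B : Matrix ι ι ℤ) (S : Set (ι → ℚ)) : AddSubgroup (dualOf B S) :=
  AddSubgroup.closure {x | (x : ι → ℚ) ∈ S}

/-- The discriminant group `S*/S`. -/
def disc (B : Matrix ι ι ℤ) (S : Set (ι → ℚ)) : Type :=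
  dualOf B S ⧸ latIn B S

noncomputable instance (B : Matrix ι ι ℤ) (S : Set (ι → ℚ)) : AddCommGroup (disc B S) :=
  inferInstanceAs (AddCommGroup (dualOf B S ⧸ latIn B S))

/-- The class of a dual vector in the discriminant group. -/
def dmk (B : Matrix ι ι ℤ) (S : Set (ι → ℚ)) {x : ι → ℚ} (hx : x ∈ dualOf B S) :
    disc B S := QuotientAddGroup.mk (⟨x, hx⟩ : dualOf B S)

/-- `S` is an additive subgroup (a sublattice, when contained in a lattice). -/
def IsLat (S : Set (ι → ℚ)) : Prop :=
  (0 : ι → ℚ) ∈ S ∧ ∀ x ∈ S, ∀ y ∈ S, x - y ∈ S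

/-- The form is integer valued on `S`. -/
def IntegralOn (B : Matrix ι ι ℤ) (S : Set (ι → ℚ)) : Prop :=
  ∀ x ∈ S, ∀ y ∈ S, isInt (qform B x y)

/-- Unimodularity: the dual lattice equals the lattice. -/
def UnimodularOn (B : Matrix ι ι ℤ) (S : Set (ι → ℚ)) : Prop :=
  ((dualOf B S : AddSubgroup (ι → ℚ)) : Set (ι → ℚ)) = S

/-- Positive definiteness of the form on the span of `S`. -/
def PosDefOn (B : Matrix ι ι ℤ) (S : Set (ι → ℚ)) : Prop :=
  ∀ x ∈ Submodule.span ℚ S, x ≠ 0 → 0 < qform B x x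

/-- Orthogonality of two sublattices. -/
def OrthogonalSets (B : Matrix ι ι ℤ) (S T : Set (ι → ℚ)) : Prop :=
  ∀ x ∈ S, ∀ y ∈ T, qform B x y = 0

/-- `S, T` are complementary sublattices of `L`: orthogonal with ranks summing to `rk L`. -/
noncomputable def ComplementaryIn (B : Matrix ι ι ℤ) (L S T : Set (ι → ℚ)) : Prop :=
  OrthogonalSets B S T ∧ rkOf S + rkOf T = rkOf L

/-- `S ⊆ L` is a primitive sublattice: the restriction map `L* → S*` surjects. -/
def PrimitiveIn (B : Matrix ι ι ℤ) (L S : Set (ι → ℚ)) : Prop :=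
  ∀ x ∈ dualOf B S, ∃ z ∈ dualOf B L, ∀ u ∈ S, qform B z u = qform B x u

/-- `s` is the signature of the form restricted to the span of `S` (Sylvester form). -/
def IsSignatureOf (B : Matrix ι ι ℤ) (S : Set (ι → ℚ)) (s : ℤ) : Prop :=
  ∃ (p q : ℕ) (v : Fin (p + q) → (ι → ℚ)),
    (∀ i, v i ∈ Submodule.span ℚ S) ∧
    Submodule.span ℚ (Set.range v) = Submodule.span ℚ S ∧
    LinearIndependent ℚ v ∧
    (∀ i j, i ≠ j → qform B (v i) (v j) = 0) ∧
    (∀ i : Fin (p + q),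
      if (i : ℕ) < p then 0 < qform B (v i) (v i) else qform B (v i) (v i) < 0) ∧
    s = (p : ℤ) - (q : ℤ)

/-- `S` admits an orthonormal basis of `n` elements, i.e. `S ≅ ℤⁿ`. -/
def HasOrthonormalBasis (B : Matrix ι ι ℤ) (S : Set (ι → ℚ)) (n : ℕ) : Prop :=
  ∃ v : Fin n → (ι → ℚ), (∀ i, v i ∈ S) ∧
    (∀ i j, qform B (v i) (v j) = if i = j then 1 else 0) ∧
    (∀ x ∈ S, ∃ c : Fin n → ℤ, x = ∑ i, (c i : ℚ) • v i)

/-- Isomorphism of lattices: an additive bijection preserving the forms. -/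
def LatIso (B : Matrix ι ι ℤ) (S : Set (ι → ℚ)) (B' : Matrix ι' ι' ℤ) (S' : Set (ι' → ℚ)) :
    Prop :=
  ∃ f : (ι → ℚ) → (ι' → ℚ), Set.BijOn f S S' ∧
    (∀ x ∈ S, ∀ y ∈ S, f (x + y) = f x + f y) ∧
    (∀ x ∈ S, ∀ y ∈ S, qform B' (f x) (f y) = qform B x y)

/-- An isomorphism of the torsors `C(S₁) → C(S₂)` (given on representatives by `Φ`),
covering the group isomorphism `ψ` of discriminant groups. -/
def TorsorMapIso (B₁ : Matrix ι ι ℤ) (S₁ : Set (ι → ℚ))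
    (B₂ : Matrix ι' ι' ℤ) (S₂ : Set (ι' → ℚ))
    (Φ : (ι → ℚ) → (ι' → ℚ)) (ψ : disc B₁ S₁ ≃+ disc B₂ S₂) : Prop :=
  (∀ χ ∈ CharOf B₁ S₁, Φ χ ∈ CharOf B₂ S₂) ∧
  (∀ χ ∈ CharOf B₁ S₁, ∀ χ' ∈ CharOf B₁ S₁,
    (SameClass S₁ χ χ' ↔ SameClass S₂ (Φ χ) (Φ χ'))) ∧
  (∀ μ ∈ CharOf B₂ S₂, ∃ χ ∈ CharOf B₁ S₁, SameClass S₂ (Φ χ) μ) ∧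
  (∀ χ ∈ CharOf B₁ S₁, ∀ χ' ∈ CharOf B₁ S₁,
    ∀ (x : ι → ℚ) (y : ι' → ℚ) (hx : x ∈ dualOf B₁ S₁) (hy : y ∈ dualOf B₂ S₂),
      χ' = χ + (2 : ℚ) • x → Φ χ' = Φ χ + (2 : ℚ) • y →
      ψ (dmk B₁ S₁ hx) = dmk B₂ S₂ hy)

/-- Compatibility of `Φ` with the `d`-invariants: `d₂([Φ χ]) = ε · d₁([χ])`,
where `d` is the minimum of `(|χ'|² - rk)/4` over the class. -/
noncomputable def DCompat (B₁ : Matrix ι ι ℤ) (S₁ : Set (ι → ℚ))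
    (B₂ : Matrix ι' ι' ℤ) (S₂ : Set (ι' → ℚ))
    (ε : ℚ) (Φ : (ι → ℚ) → (ι' → ℚ)) : Prop :=
  ∀ χ ∈ CharOf B₁ S₁, ∀ q : ℚ,
    IsLeast {t | ∃ χ' ∈ CharOf B₁ S₁, SameClass S₁ χ χ' ∧
      t = (qform B₁ χ' χ' - (rkOf S₁ : ℚ)) / 4} q →
    IsLeast {t | ∃ μ ∈ CharOf B₂ S₂, SameClass S₂ (Φ χ) μ ∧
      t = (qform B₂ μ μ - (rkOf S₂ : ℚ)) / 4} (ε * q)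

/-- Compatibility of `Φ` with the `ρ`-invariants: `ρ₂([Φ χ]) ≡ ε · ρ₁([χ]) (mod 2)`. -/
def RhoCompat (B₁ : Matrix ι ι ℤ) (S₁ : Set (ι → ℚ))
    (B₂ : Matrix ι' ι' ℤ) (S₂ : Set (ι' → ℚ))
    (ε : ℚ) (Φ : (ι → ℚ) → (ι' → ℚ)) : Prop :=
  ∀ χ ∈ CharOf B₁ S₁, ∀ s₁ s₂ : ℤ, IsSignatureOf B₁ S₁ s₁ → IsSignatureOf B₂ S₂ s₂ →
    ∃ m : ℤ, (qform B₂ (Φ χ) (Φ χ) - (s₂ : ℚ)) / 4 - ε * ((qform B₁ χ χ - (s₁ : ℚ)) / 4)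
      = 2 * (m : ℚ)

/-- The `d`-invariants `(C(S₁), d₁)` and `(C(S₂), ε·d₂)` are isomorphic. -/
noncomputable def DIso (B₁ : Matrix ι ι ℤ) (S₁ : Set (ι → ℚ))
    (B₂ : Matrix ι' ι' ℤ) (S₂ : Set (ι' → ℚ)) (ε : ℚ) : Prop :=
  ∃ (Φ : (ι → ℚ) → (ι' → ℚ)) (ψ : disc B₁ S₁ ≃+ disc B₂ S₂),
    TorsorMapIso B₁ S₁ B₂ S₂ Φ ψ ∧ DCompat B₁ S₁ B₂ S₂ ε Φ

end LatticeDefs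

/-- An abstract integral lattice, presented by its Gram matrix. -/
structure IntLattice where
  n : ℕ
  B : Matrix (Fin n) (Fin n) ℤ
  symm : B.IsSymm
  nondeg : B.det ≠ 0

/-- The Gram matrix of the orthogonal direct sum `Λ₁ ⊥ Λ₂`. -/
def glueGram (L₁ L₂ : IntLattice) :
    Matrix (Fin L₁.n ⊕ Fin L₂.n) (Fin L₁.n ⊕ Fin L₂.n) ℤ :=
  Matrix.fromBlocks L₁.B 0 0 L₂.B

/-- The glue lattice `Λ₁ ⊕_ψ Λ₂ = {x + y ∈ Λ₁* ⊕ Λ₂* : ψ(x̄) = ȳ}`. -/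
def glueSet (L₁ L₂ : IntLattice)
    (ψ : disc L₁.B (intVecs (Fin L₁.n)) ≃+ disc L₂.B (intVecs (Fin L₂.n))) :
    Set (Fin L₁.n ⊕ Fin L₂.n → ℚ) :=
  {w | ∃ (h₁ : (w ∘ Sum.inl) ∈ dualOf L₁.B (intVecs (Fin L₁.n)))
        (h₂ : (w ∘ Sum.inr) ∈ dualOf L₂.B (intVecs (Fin L₂.n))),
        ψ (dmk _ _ h₁) = dmk _ _ h₂}

/-- `Λ₁` embedded in the first factor of `Λ₁* ⊕ Λ₂*`. -/
def inlLat (L₁ L₂ : IntLattice) : Set (Fin L₁.n ⊕ Fin L₂.n → ℚ) :=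
  {w | (w ∘ Sum.inl) ∈ intVecs (Fin L₁.n) ∧ w ∘ Sum.inr = 0}

/-- `Λ₂` embedded in the second factor of `Λ₁* ⊕ Λ₂*`. -/
def inrLat (L₁ L₂ : IntLattice) : Set (Fin L₁.n ⊕ Fin L₂.n → ℚ) :=
  {w | (w ∘ Sum.inr) ∈ intVecs (Fin L₂.n) ∧ w ∘ Sum.inl = 0}

/-- Stabilization `S ⊕ ℤᵏ`. -/
def stabSet {ι : Type} [Fintype ι] [DecidableEq ι] (S : Set (ι → ℚ)) (k : ℕ) :
    Set (ι ⊕ Fin k → ℚ) :=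
  {w | (w ∘ Sum.inl) ∈ S ∧ ∀ j, isInt (w (Sum.inr j))}

/-- A finite loopless multigraph, with a reference orientation of each edge. -/
structure MultiGraph where
  nV : ℕ
  nE : ℕ
  hd : Fin nE → Fin nV
  tl : Fin nE → Fin nV
  loopless : ∀ e, hd e ≠ tl e

namespace MultiGraph

/-- The boundary map `C₁(G;ℚ) → C₀(G;ℚ)`, `∂ e = head(e) − tail(e)`. -/
def bndry (G : MultiGraph) (x : Fin G.nE → ℚ) : Fin G.nV → ℚ :=
  fun v => ∑ e, x e * ((if G.hd e = v then 1 else 0) - (if G.tl e = v then 1 else 0))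

/-- The flow lattice `ℱ(G) = ker ∂ ∩ C₁(G;ℤ)`. -/
def flowSet (G : MultiGraph) : Set (Fin G.nE → ℚ) :=
  {x | (∀ e, isInt (x e)) ∧ G.bndry x = 0}

/-- The cut lattice `𝒞(G) = im ∂* ∩ C₁(G;ℤ)`. -/
def cutSet (G : MultiGraph) : Set (Fin G.nE → ℚ) :=
  {x | (∀ e, isInt (x e)) ∧ ∃ g : Fin G.nV → ℚ, ∀ e, x e = g (G.hd e) - g (G.tl e)}

/-- Reachability using only edges from the set `A`. -/
def ReachIn (G : MultiGraph) (A : Set (Fin G.nE)) : Fin G.nV → Fin G.nV → Prop :=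
  Relation.ReflTransGen
    (fun u v => ∃ e ∈ A, (G.hd e = u ∧ G.tl e = v) ∨ (G.hd e = v ∧ G.tl e = u))

def Connected (G : MultiGraph) : Prop := ∀ u v, G.ReachIn Set.univ u v

/-- 2-edge-connectedness: connected, and removing any one edge leaves it connected. -/
def TwoEdgeConnected (G : MultiGraph) : Prop :=
  G.Connected ∧ ∀ e : Fin G.nE, ∀ u v, G.ReachIn {e}ᶜ u v

/-- `C` is the edge set of a cycle of `G`. -/
def IsCycleEdgeSet (G : MultiGraph) (C : Set (Fin G.nE)) : Prop :=
  ∃ k : ℕ, 0 < k ∧ ∃ (e : Fin k → Fin G.nE) (v : Fin k → Fin G.nV),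
    Function.Injective e ∧ Function.Injective v ∧ C = Set.range e ∧
    ∀ i, (G.hd (e i) = v (finRotate k i) ∧ G.tl (e i) = v i) ∨
         (G.tl (e i) = v (finRotate k i) ∧ G.hd (e i) = v i)

/-- A maximal spanning forest: acyclic and realizing all of `G`'s reachability. -/
def IsMaxForest (G : MultiGraph) (F : Finset (Fin G.nE)) : Prop :=
  (∀ C, G.IsCycleEdgeSet C → ¬(C ⊆ (↑F : Set (Fin G.nE)))) ∧
  ∀ u v, G.ReachIn Set.univ u v → G.ReachIn (↑F) u v

open Classical in
/-- The fundamental cut vector of `e ∈ F`: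
`+1` on edges leaving the component `K₁` of the tail of `e` in `F − e`,
`−1` on edges entering it, `0` otherwise. -/
noncomputable def cutVec (G : MultiGraph) (F : Finset (Fin G.nE)) (e : Fin G.nE) :
    Fin G.nE → ℚ := fun j =>
  (if G.ReachIn (↑(F.erase e)) (G.tl j) (G.tl e) then 1 else 0)
    - (if G.ReachIn (↑(F.erase e)) (G.hd j) (G.tl e) then 1 else 0)

/-- `x` is the fundamental cycle vector of `e ∉ F`: the unique flow supported on
`F ∪ {e}` whose coefficient on `e` is `+1`. -/
def IsFundCycleVec (G : MultiGraph) (F : Finset (Fin G.nE)) (e : Fin G.nE)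
    (x : Fin G.nE → ℚ) : Prop :=
  G.bndry x = 0 ∧ (∀ j, j ∉ F → j ≠ e → x j = 0) ∧ x e = 1

/-- Reorienting the edges of `G`: `o e = true` keeps the reference direction. -/
def reorient (G : MultiGraph) (o : Fin G.nE → Bool) : MultiGraph :=
  { G with
    hd := fun e => if o e then G.hd e else G.tl e
    tl := fun e => if o e then G.tl e else G.hd e
    loopless := by
      intro e
      by_cases h : o e = true
      · simpa [h] using G.loopless e
      · simpa [h] using (G.loopless e).symm }

end MultiGraph

/-- A 2-isomorphism: a bijection of edge sets preserving edge sets of cycles. -/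
def TwoIsomorphic (G G' : MultiGraph) : Prop :=
  ∃ σ : Fin G.nE ≃ Fin G'.nE, ∀ C, G.IsCycleEdgeSet C ↔ G'.IsCycleEdgeSet (σ '' C)

namespace G18

open MultiGraph Finset

lemma qform_one {ι : Type} [Fintype ι] [DecidableEq ι] (x y : ι → ℚ) :
    qform (1 : Matrix ι ι ℤ) x y = ∑ e, x e * y e := by
  rw [qform, Matrix.map_one _ (by norm_num) (by norm_num), Matrix.one_mulVec]
  rfl

lemma mem_dualOf {ι : Type} [Fintype ι] [DecidableEq ι] {B : Matrix ι ι ℤ}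
    {S : Set (ι → ℚ)} {x : ι → ℚ} :
    x ∈ dualOf B S ↔ x ∈ Submodule.span ℚ S ∧ ∀ y ∈ S, isInt (qform B x y) := Iff.rfl

lemma isInt_sum {ι : Type} (s : Finset ι) (f : ι → ℚ) (h : ∀ i ∈ s, isInt (f i)) :
    isInt (∑ i ∈ s, f i) := by
  classical
  induction s using Finset.induction with
  | empty => exact ⟨0, by simp⟩
  | insert _ _ hx ih =>
      rw [Finset.sum_insert hx]
      obtain ⟨m, hm⟩ := h _ (Finset.mem_insert_self _ _)
      obtain ⟨k, hk⟩ := ih (fun i hi => h i (Finset.mem_insert_of_mem hi))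
      exact ⟨m + k, by rw [hm, hk]; push_cast; ring⟩

lemma isInt_mul {a b : ℚ} (ha : isInt a) (hb : isInt b) : isInt (a * b) := by
  obtain ⟨m, hm⟩ := ha; obtain ⟨k, hk⟩ := hb
  exact ⟨m * k, by rw [hm, hk]; push_cast; ring⟩

lemma qform_expand {ι : Type} [Fintype ι] [DecidableEq ι] (χ y u : ι → ℚ) :
    qform (1 : Matrix ι ι ℤ) (χ + (2:ℚ) • y) u
      = qform (1 : Matrix ι ι ℤ) χ u + 2 * ∑ e, y e * u e := by
  rw [qform_one, qform_one, Finset.mul_sum, ← Finset.sum_add_distrib]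
  refine Finset.sum_congr rfl fun e _ => ?_
  simp only [Pi.add_apply, Pi.smul_apply, smul_eq_mul]
  ring

lemma qform_sq_expand {ι : Type} [Fintype ι] [DecidableEq ι] (χ y : ι → ℚ) :
    qform (1 : Matrix ι ι ℤ) (χ + (2:ℚ) • y) (χ + (2:ℚ) • y)
      = qform (1 : Matrix ι ι ℤ) χ χ + 4 * (∑ e, χ e * y e) + 4 * (∑ e, y e * y e) := by
  rw [qform_one, qform_one, Finset.mul_sum, Finset.mul_sum, ← Finset.sum_add_distrib,
    ← Finset.sum_add_distrib]
  refine Finset.sum_congr rfl fun e _ => ?_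
  simp only [Pi.add_apply, Pi.smul_apply, smul_eq_mul]
  ring

/-- Shifting a characteristic covector by twice a lattice vector stays characteristic. -/
lemma char_shift {G : MultiGraph} {χ y : Fin G.nE → ℚ}
    (hχ : χ ∈ CharOf (1 : Matrix (Fin G.nE) (Fin G.nE) ℤ) G.cutSet) (hy : y ∈ G.cutSet) :
    χ + (2:ℚ) • y ∈ CharOf (1 : Matrix (Fin G.nE) (Fin G.nE) ℤ) G.cutSet := by
  obtain ⟨⟨hspan, hint⟩, hchar⟩ := hχ
  refine ⟨⟨?_, ?_⟩, ?_⟩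
  · exact Submodule.add_mem _ hspan (Submodule.smul_mem _ _ (Submodule.subset_span hy))
  · intro u hu
    obtain ⟨m, hm⟩ := hint u hu
    obtain ⟨k, hk⟩ := isInt_sum Finset.univ (fun e => y e * u e)
      (fun e _ => isInt_mul (hy.1 e) (hu.1 e))
    exact ⟨m + 2 * k, by rw [qform_expand, hm, hk]; push_cast; ring⟩
  · intro u hu
    obtain ⟨m, hm⟩ := hchar u hu
    obtain ⟨k, hk⟩ := isInt_sum Finset.univ (fun e => y e * u e)
      (fun e _ => isInt_mul (hy.1 e) (hu.1 e))
    exact ⟨m + k, by rw [qform_expand, hk]; rw [sub_eq_iff_eq_add] at hm ⊢; rw [hm]; push_cast; ring⟩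

section Comb

variable (G : MultiGraph)

def zv (z : Fin G.nE → Bool) : Fin G.nE → ℤ := fun e => if z e then 1 else 0

def dz (z : Fin G.nE → Bool) (v : Fin G.nV) : ℤ :=
  ∑ e, zv G z e * ((if G.hd e = v then 1 else 0) - (if G.tl e = v then 1 else 0))

def stepE (z : Fin G.nE → Bool) (e : Fin G.nE) (u v : Fin G.nV) : Prop :=
  (z e = false ∧ G.tl e = u ∧ G.hd e = v) ∨ (z e = true ∧ G.hd e = u ∧ G.tl e = v)

def stp (z : Fin G.nE → Bool) (u v : Fin G.nV) : Prop := ∃ e, stepE G z e u v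

def walk (z : Fin G.nE → Bool) : List (Fin G.nE) → Fin G.nV → Fin G.nV → Prop
  | [], u, w => u = w
  | e :: l, u, w => ∃ v, stepE G z e u v ∧ walk z l v w

def flip (z : Fin G.nE → Bool) (e₀ : Fin G.nE) : Fin G.nE → Bool :=
  fun e => if e = e₀ then !(z e₀) else z e

def Dm (b : Fin G.nV → ℤ) (z : Fin G.nE → Bool) : ℤ := ∑ v, |b v - dz G z v|

variable {G}

lemma step_ne {z : Fin G.nE → Bool} {e u v} (h : stepE G z e u v) : u ≠ v := by
  intro huv
  rcases h with ⟨-, h1, h2⟩ | ⟨-, h1, h2⟩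
  · exact G.loopless e (by rw [h1, h2, huv])
  · exact G.loopless e (by rw [h1, h2, huv])

lemma step_unique {z : Fin G.nE → Bool} {e u v u' v'}
    (h : stepE G z e u v) (h' : stepE G z e u' v') : u = u' ∧ v = v' := by
  rcases h with ⟨hz, h1, h2⟩ | ⟨hz, h1, h2⟩ <;>
    rcases h' with ⟨hz', h1', h2'⟩ | ⟨hz', h1', h2'⟩ <;>
    first
      | (exact ⟨h1.symm.trans h1', h2.symm.trans h2'⟩)
      | (rw [hz] at hz'; cases hz')

lemma walk_append {z : Fin G.nE → Bool} {l₁ l₂ : List (Fin G.nE)} {u x w}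
    (h1 : walk G z l₁ u x) (h2 : walk G z l₂ x w) : walk G z (l₁ ++ l₂) u w := by
  induction l₁ generalizing u with
  | nil => have : u = x := h1; subst this; exact h2
  | cons e l ih =>
      obtain ⟨v, hs, hw⟩ := h1
      exact ⟨v, hs, ih hw⟩

lemma reach_walk {z : Fin G.nE → Bool} {u w}
    (h : Relation.ReflTransGen (stp G z) u w) : ∃ l, walk G z l u w := by
  induction h with
  | refl => exact ⟨[], rfl⟩
  | tail _ hstep ih =>
      obtain ⟨l, hl⟩ := ih
      obtain ⟨e, he⟩ := hstep
      exact ⟨l ++ [e], walk_append hl ⟨_, he, rfl⟩⟩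

lemma walk_congr {z z' : Fin G.nE → Bool} {l : List (Fin G.nE)} {u w}
    (hagree : ∀ e ∈ l, z' e = z e) (h : walk G z l u w) : walk G z' l u w := by
  induction l generalizing u with
  | nil => exact h
  | cons e l ih =>
      obtain ⟨v, hs, hw⟩ := h
      refine ⟨v, ?_, ih (fun f hf => hagree f (List.mem_cons_of_mem _ hf)) hw⟩
      have hze : z' e = z e := hagree e (List.mem_cons_self)
      rcases hs with ⟨h0, h1, h2⟩ | ⟨h0, h1, h2⟩
      · exact Or.inl ⟨hze.trans h0, h1, h2⟩
      · exact Or.inr ⟨hze.trans h0, h1, h2⟩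

lemma walk_extract {z : Fin G.nE → Bool} {u v e} (hst : stepE G z e u v) :
    ∀ (l : List (Fin G.nE)) (x w), walk G z l x w → e ∈ l →
      ∃ l', e ∉ l' ∧ l'.length < l.length ∧ walk G z l' v w := by
  intro l
  induction l with
  | nil => intro x w _ hmem; simp at hmem
  | cons f rest ih =>
      intro x w hwalk hmem
      obtain ⟨y, hs, hw⟩ := hwalk
      by_cases hmem' : e ∈ rest
      · obtain ⟨l', h1, h2, h3⟩ := ih y w hw hmem'
        exact ⟨l', h1, Nat.lt_succ_of_lt h2, h3⟩
      · have hef : e = f := by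
          rcases List.mem_cons.mp hmem with h | h
          · exact h
          · exact absurd h hmem'
        subst hef
        have hyv : y = v := (step_unique hs hst).2
        subst hyv
        exact ⟨rest, hmem', Nat.lt_succ_self _, hw⟩

lemma flip_ne {z : Fin G.nE → Bool} {e₀ f} (h : f ≠ e₀) : flip G z e₀ f = z f := by
  simp [flip, h]

lemma zv_flip {z : Fin G.nE → Bool} {e₀} (e) :
    zv G (flip G z e₀) e = if e = e₀ then 1 - zv G z e₀ else zv G z e := by
  by_cases h : e = e₀ <;> simp [zv, flip, h] <;> cases z e₀ <;> simp

lemma dz_flip {z : Fin G.nE → Bool} {e₀ u v} (hst : stepE G z e₀ u v) (x : Fin G.nV) :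
    dz G (flip G z e₀) x = dz G z x - (if u = x then 1 else 0) + (if v = x then 1 else 0) := by
  have hdiff : dz G (flip G z e₀) x - dz G z x
      = ∑ e, (if e = e₀ then (1 - 2 * zv G z e₀) *
          ((if G.hd e₀ = x then (1:ℤ) else 0) - (if G.tl e₀ = x then 1 else 0)) else 0) := by
    rw [dz, dz, ← Finset.sum_sub_distrib]
    refine Finset.sum_congr rfl fun e _ => ?_
    by_cases h : e = e₀
    · subst h; rw [if_pos rfl, zv_flip, if_pos rfl]; ring
    · rw [zv_flip, if_neg h, if_neg h]; ring
  rw [Finset.sum_ite_eq' Finset.univ e₀, if_pos (Finset.mem_univ _)] at hdiff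
  rcases hst with ⟨hz, h1, h2⟩ | ⟨hz, h1, h2⟩
  · rw [h1, h2] at hdiff
    have : zv G z e₀ = 0 := by simp [zv, hz]
    rw [this] at hdiff; linarith
  · rw [h1, h2] at hdiff
    have : zv G z e₀ = 1 := by simp [zv, hz]
    rw [this] at hdiff; linarith

lemma dm_sub (b : Fin G.nV → ℤ) {z z' : Fin G.nE → Bool} {u v : Fin G.nV} (huv : u ≠ v)
    (hdz : ∀ x, dz G z' x = dz G z x - (if u = x then 1 else 0) + (if v = x then 1 else 0)) :
    Dm G b z' - Dm G b z
      = (|b u - dz G z u + 1| - |b u - dz G z u|)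
        + (|b v - dz G z v - 1| - |b v - dz G z v|) := by
  rw [Dm, Dm, ← Finset.sum_sub_distrib]
  have key : ∀ x, |b x - dz G z' x| - |b x - dz G z x|
      = (if x = u then |b u - dz G z u + 1| - |b u - dz G z u| else 0)
        + (if x = v then |b v - dz G z v - 1| - |b v - dz G z v| else 0) := by
    intro x
    rcases eq_or_ne x u with rfl | hxu
    · have hvx : ¬ (v = x) := fun h => huv h.symm
      simp only [hdz x, if_pos rfl, if_neg hvx, if_neg huv, eq_self_iff_true, if_true]
      ring_nf
    · rcases eq_or_ne x v with rfl | hxv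
      · have hux : ¬ (u = x) := fun h => hxu h.symm
        simp only [hdz x, if_pos rfl, if_neg hux, if_neg hxu, eq_self_iff_true, if_true]
        ring_nf
      · have hux : ¬ (u = x) := fun h => hxu h.symm
        have hvx : ¬ (v = x) := fun h => hxv h.symm
        simp only [hdz x, if_neg hux, if_neg hvx, if_neg hxu, if_neg hxv]
        ring_nf
  rw [Finset.sum_congr rfl (fun x _ => key x), Finset.sum_add_distrib,
    Finset.sum_ite_eq' Finset.univ u, Finset.sum_ite_eq' Finset.univ v,
    if_pos (Finset.mem_univ _), if_pos (Finset.mem_univ _)]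

lemma Dm_flip_lt {b : Fin G.nV → ℤ} {z : Fin G.nE → Bool} {e u v}
    (hst : stepE G z e u v) (hu : b u < dz G z u) (hv : dz G z v < b v) :
    Dm G b (flip G z e) < Dm G b z := by
  have huv := step_ne hst
  have h := dm_sub b huv (dz_flip hst)
  have h1 : |b u - dz G z u + 1| = |b u - dz G z u| - 1 := by
    rw [abs_of_nonpos (by omega), abs_of_nonpos (by omega)]; ring
  have h2 : |b v - dz G z v - 1| = |b v - dz G z v| - 1 := by
    rw [abs_of_nonneg (by omega), abs_of_nonneg (by omega)]
  linarith

lemma Dm_flip_eq {b : Fin G.nV → ℤ} {z : Fin G.nE → Bool} {e u v}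
    (hst : stepE G z e u v) (hu : b u < dz G z u) (hv : b v ≤ dz G z v) :
    Dm G b (flip G z e) = Dm G b z := by
  have huv := step_ne hst
  have h := dm_sub b huv (dz_flip hst)
  have h1 : |b u - dz G z u + 1| = |b u - dz G z u| - 1 := by
    rw [abs_of_nonpos (by omega), abs_of_nonpos (by omega)]; ring
  have h2 : |b v - dz G z v - 1| = |b v - dz G z v| + 1 := by
    rw [abs_of_nonpos (by omega), abs_of_nonpos (by omega)]; ring
  linarith

lemma aug (b : Fin G.nV → ℤ) :
    ∀ (n : ℕ) (z : Fin G.nE → Bool) (u w : Fin G.nV) (l : List (Fin G.nE)),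
      l.length ≤ n → walk G z l u w → b u < dz G z u → dz G z w < b w →
      ∃ z', Dm G b z' < Dm G b z := by
  intro n
  induction n with
  | zero =>
      intro z u w l hl hwalk hu hw
      have hnil : l = [] := List.length_eq_zero_iff.mp (Nat.le_zero.mp hl)
      subst hnil
      have : u = w := hwalk
      subst this
      omega
  | succ n ih =>
      intro z u w l hl hwalk hu hw
      cases l with
      | nil =>
          have : u = w := hwalk
          subst this; omega
      | cons e rest =>
          obtain ⟨v, hst, hrest⟩ := hwalk
          by_cases hv : dz G z v < b v
          · exact ⟨flip G z e, Dm_flip_lt hst hu hv⟩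
          · push_neg at hv
            have heq := Dm_flip_eq hst hu hv
            have hdz := dz_flip hst
            have huv := step_ne hst
            have hwu : w ≠ u := by intro h; subst h; omega
            have hwv : w ≠ v := by intro h; subst h; omega
            have hdzv : b v < dz G (flip G z e) v := by
              rw [hdz v, if_neg huv, if_pos rfl]; omega
            have hdzw : dz G (flip G z e) w < b w := by
              rw [hdz w, if_neg (fun h => hwu h.symm), if_neg (fun h => hwv h.symm)]; omega
            have hrestlen : rest.length ≤ n := by
              simpa using Nat.le_of_succ_le_succ hl
            by_cases hmem : e ∈ rest
            · obtain ⟨l', hne, hlen, hwalk'⟩ := walk_extract hst rest v w hrest hmem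
              have hwalk'' : walk G (flip G z e) l' v w :=
                walk_congr (fun f hf => flip_ne (fun h => hne (h ▸ hf))) hwalk'
              obtain ⟨z'', hz''⟩ := ih (flip G z e) v w l' (by omega) hwalk'' hdzv hdzw
              exact ⟨z'', by linarith⟩
            · have hwalk'' : walk G (flip G z e) rest v w :=
                walk_congr (fun f hf => flip_ne (fun h => hmem (h ▸ hf))) hrest
              obtain ⟨z'', hz''⟩ := ih (flip G z e) v w rest hrestlen hwalk'' hdzv hdzw
              exact ⟨z'', by linarith⟩

lemma sum_dz (z : Fin G.nE → Bool) (R : Finset (Fin G.nV)) :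
    ∑ v ∈ R, dz G z v
      = ∑ e, zv G z e * ((if G.hd e ∈ R then 1 else 0) - (if G.tl e ∈ R then 1 else 0)) := by
  rw [show (∑ v ∈ R, dz G z v)
      = ∑ v ∈ R, ∑ e, zv G z e * ((if G.hd e = v then 1 else 0) - (if G.tl e = v then 1 else 0))
      from rfl, Finset.sum_comm]
  refine Finset.sum_congr rfl fun e _ => ?_
  rw [← Finset.mul_sum, Finset.sum_sub_distrib, Finset.sum_ite_eq, Finset.sum_ite_eq]

lemma sum_dz_univ (z : Fin G.nE → Bool) : ∑ v, dz G z v = 0 := by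
  rw [sum_dz]
  simp

lemma flow_exists (b : Fin G.nV → ℤ) (hsum : ∑ v, b v = 0)
    (hcut : ∀ R : Finset (Fin G.nV),
      -(((Finset.univ.filter (fun e => G.tl e ∈ R ∧ G.hd e ∉ R)).card : ℤ)) ≤ ∑ v ∈ R, b v) :
    ∃ z : Fin G.nE → Bool, ∀ v, dz G z v = b v := by
  classical
  obtain ⟨z, -, hmin⟩ := Finset.exists_min_image (Finset.univ : Finset (Fin G.nE → Bool))
    (Dm G b) ⟨fun _ => false, Finset.mem_univ _⟩
  refine ⟨z, ?_⟩
  by_contra hne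
  push_neg at hne
  have hu : ∃ u, b u < dz G z u := by
    by_contra h
    push_neg at h
    have h0 : ∑ v, (b v - dz G z v) = 0 := by
      rw [Finset.sum_sub_distrib, hsum, sum_dz_univ]
      simp
    have hall : ∀ v, b v = dz G z v := by
      intro v
      have := (Finset.sum_eq_zero_iff_of_nonneg
        (fun i _ => by have := h i; omega)).mp h0 v (Finset.mem_univ v)
      omega
    obtain ⟨v, hv⟩ := hne
    exact hv (hall v).symm
  obtain ⟨u, hu⟩ := hu
  set R : Finset (Fin G.nV) :=
    Finset.univ.filter (fun v => Relation.ReflTransGen (stp G z) u v) with hR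
  have huR : u ∈ R := by
    simp only [hR, Finset.mem_filter, Finset.mem_univ, true_and]
    exact Relation.ReflTransGen.refl
  have hclosed : ∀ v ∈ R, ∀ x, stp G z v x → x ∈ R := by
    intro v hv x hst
    simp only [hR, Finset.mem_filter, Finset.mem_univ, true_and] at hv ⊢
    exact hv.tail hst
  by_cases hw : ∃ w ∈ R, dz G z w < b w
  · obtain ⟨w, hwR, hw⟩ := hw
    have hreach : Relation.ReflTransGen (stp G z) u w := by
      rw [hR] at hwR
      exact (Finset.mem_filter.mp hwR).2
    obtain ⟨l, hl⟩ := reach_walk hreach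
    obtain ⟨z', hz'⟩ := aug b l.length z u w l le_rfl hl hu hw
    have := hmin z' (Finset.mem_univ _)
    omega
  · push_neg at hw
    have hout : ∑ v ∈ R, dz G z v
        = -(((Finset.univ.filter (fun e => G.tl e ∈ R ∧ G.hd e ∉ R)).card : ℤ)) := by
      rw [sum_dz]
      have hper : ∀ e ∈ Finset.univ,
          zv G z e * ((if G.hd e ∈ R then 1 else 0) - (if G.tl e ∈ R then (1:ℤ) else 0))
            = if G.tl e ∈ R ∧ G.hd e ∉ R then -1 else 0 := by
        intro e _
        by_cases hh : G.hd e ∈ R <;> by_cases ht : G.tl e ∈ R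
        · simp [hh, ht]
        · have hz0 : z e = false := by
            cases hzc : z e
            · rfl
            · exact absurd (hclosed _ hh _ ⟨e, Or.inr ⟨hzc, rfl, rfl⟩⟩) ht
          simp [zv, hh, ht, hz0]
        · have hz1 : z e = true := by
            cases hzc : z e
            · exact absurd (hclosed _ ht _ ⟨e, Or.inl ⟨hzc, rfl, rfl⟩⟩) hh
            · rfl
          simp [zv, hh, ht, hz1]
        · simp [hh, ht]
      rw [Finset.sum_congr rfl hper, Finset.sum_ite, Finset.sum_const, Finset.sum_const]
      simp
    have hlt : ∑ v ∈ R, b v < ∑ v ∈ R, dz G z v :=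
      Finset.sum_lt_sum (fun i hi => hw i hi) ⟨u, huR, hu⟩
    have := hcut R
    omega

end Comb

section Bridge

variable {G : MultiGraph}

lemma yv_mem (v : Fin G.nV) :
    (fun e => ((if G.hd e = v then 1 else 0) - (if G.tl e = v then 1 else 0) : ℚ)) ∈ G.cutSet := by
  constructor
  · intro e
    refine ⟨(if G.hd e = v then 1 else 0) - (if G.tl e = v then 1 else 0), ?_⟩
    push_cast
    split_ifs <;> norm_num
  · exact ⟨fun w => if w = v then 1 else 0, fun e => rfl⟩

lemma yR_mem (R : Finset (Fin G.nV)) :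
    (fun e => ((if G.tl e ∈ R then 1 else 0) - (if G.hd e ∈ R then 1 else 0) : ℚ)) ∈ G.cutSet := by
  constructor
  · intro e
    refine ⟨(if G.tl e ∈ R then 1 else 0) - (if G.hd e ∈ R then 1 else 0), ?_⟩
    push_cast
    split_ifs <;> norm_num
  · refine ⟨fun w => if w ∈ R then -1 else 0, fun e => ?_⟩
    show (if G.tl e ∈ R then (1:ℚ) else 0) - (if G.hd e ∈ R then 1 else 0)
      = (if G.hd e ∈ R then (-1:ℚ) else 0) - (if G.tl e ∈ R then (-1:ℚ) else 0)
    split_ifs <;> ring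

lemma bndry_sum_zero (x : Fin G.nE → ℚ) : ∑ v, G.bndry x v = 0 := by
  rw [show (∑ v, G.bndry x v)
      = ∑ v, ∑ e, x e * ((if G.hd e = v then 1 else 0) - (if G.tl e = v then 1 else 0))
      from rfl, Finset.sum_comm]
  refine Finset.sum_eq_zero fun e _ => ?_
  rw [← Finset.mul_sum, Finset.sum_sub_distrib, Finset.sum_ite_eq, Finset.sum_ite_eq]
  simp

lemma sum_bndry (x : Fin G.nE → ℚ) (R : Finset (Fin G.nV)) :
    ∑ v ∈ R, G.bndry x v
      = ∑ e, x e * ((if G.hd e ∈ R then 1 else 0) - (if G.tl e ∈ R then 1 else 0)) := by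
  rw [show (∑ v ∈ R, G.bndry x v)
      = ∑ v ∈ R, ∑ e, x e * ((if G.hd e = v then 1 else 0) - (if G.tl e = v then 1 else 0))
      from rfl, Finset.sum_comm]
  refine Finset.sum_congr rfl fun e _ => ?_
  rw [← Finset.mul_sum, Finset.sum_sub_distrib, Finset.sum_ite_eq, Finset.sum_ite_eq]

lemma adjoint (x : Fin G.nE → ℚ) (g : Fin G.nV → ℚ) :
    ∑ e, x e * (g (G.hd e) - g (G.tl e)) = ∑ v, g v * G.bndry x v := by
  have key : ∀ v, g v * G.bndry x v
      = ∑ e, (x e * (if G.hd e = v then g v else 0) - x e * (if G.tl e = v then g v else 0)) := by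
    intro v
    rw [MultiGraph.bndry, Finset.mul_sum]
    refine Finset.sum_congr rfl fun e _ => ?_
    split_ifs <;> ring
  rw [Finset.sum_congr rfl (fun v _ => key v), Finset.sum_comm]
  refine Finset.sum_congr rfl fun e _ => ?_
  rw [Finset.sum_sub_distrib]
  simp only [mul_ite, mul_zero]
  rw [Finset.sum_ite_eq, Finset.sum_ite_eq]
  simp only [Finset.mem_univ, if_true]
  ring

lemma bndry_eq_qform_iff {χ s : Fin G.nE → ℚ}
    (h : ∀ v, G.bndry χ v = G.bndry s v) :
    ∀ y ∈ G.cutSet, qform (1 : Matrix (Fin G.nE) (Fin G.nE) ℤ) χ y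
      = qform (1 : Matrix (Fin G.nE) (Fin G.nE) ℤ) s y := by
  intro y hy
  obtain ⟨hyint, g, hg⟩ := hy
  rw [qform_one, qform_one]
  calc ∑ e, χ e * y e = ∑ e, χ e * (g (G.hd e) - g (G.tl e)) := by
        refine Finset.sum_congr rfl fun e _ => by rw [hg e]
    _ = ∑ v, g v * G.bndry χ v := adjoint χ g
    _ = ∑ v, g v * G.bndry s v := by
        refine Finset.sum_congr rfl fun v _ => by rw [h v]
    _ = ∑ e, s e * (g (G.hd e) - g (G.tl e)) := (adjoint s g).symm
    _ = ∑ e, s e * y e := by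
        refine Finset.sum_congr rfl fun e _ => by rw [hg e]

lemma char_vertex {χ : Fin G.nE → ℚ}
    (hχ : χ ∈ CharOf (1 : Matrix (Fin G.nE) (Fin G.nE) ℤ) G.cutSet) (v : Fin G.nV) :
    ∃ k : ℤ, G.bndry χ v = G.bndry (fun _ => (1:ℚ)) v - 2 * (k : ℚ) := by
  obtain ⟨m, hm⟩ := hχ.2 _ (yv_mem v)
  have e1 : qform (1 : Matrix (Fin G.nE) (Fin G.nE) ℤ) χ
      (fun e => ((if G.hd e = v then 1 else 0) - (if G.tl e = v then 1 else 0) : ℚ))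
      = G.bndry χ v := by
    rw [qform_one]; rfl
  have e2 : qform (1 : Matrix (Fin G.nE) (Fin G.nE) ℤ)
      (fun e => ((if G.hd e = v then 1 else 0) - (if G.tl e = v then 1 else 0) : ℚ))
      (fun e => ((if G.hd e = v then 1 else 0) - (if G.tl e = v then 1 else 0) : ℚ))
      = G.bndry (fun _ => (1:ℚ)) v + 2 * ∑ e, (if G.tl e = v then (1:ℚ) else 0) := by
    rw [qform_one, MultiGraph.bndry, Finset.mul_sum, ← Finset.sum_add_distrib]
    refine Finset.sum_congr rfl fun e _ => ?_
    show ((if G.hd e = v then (1:ℚ) else 0) - (if G.tl e = v then 1 else 0))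
        * ((if G.hd e = v then (1:ℚ) else 0) - (if G.tl e = v then 1 else 0))
        = (fun _ => (1:ℚ)) e * ((if G.hd e = v then 1 else 0) - (if G.tl e = v then 1 else 0))
          + 2 * (if G.tl e = v then (1:ℚ) else 0)
    by_cases hh : G.hd e = v <;> by_cases ht : G.tl e = v
    · exact absurd (hh.trans ht.symm) (G.loopless e)
    · simp [hh, ht]
    · simp [hh, ht]
      norm_num
    · simp [hh, ht]
  have e3 : ∑ e, (if G.tl e = v then (1:ℚ) else 0)
      = ((∑ e, if G.tl e = v then (1:ℤ) else 0 : ℤ) : ℚ) := by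
    push_cast [apply_ite (fun (x : ℤ) => (x : ℚ))]
    rfl
  refine ⟨-(m + ∑ e, if G.tl e = v then (1:ℤ) else 0), ?_⟩
  rw [e1, e2, e3] at hm
  push_cast at hm ⊢
  linarith

end Bridge

end G18

/-- a characteristic covector of the cut lattice of a graph is short
if and only if it is the restriction of `χ_𝒪` for some orientation `𝒪` of `G`,
i.e. of a vector with all coordinates `±1`. -/
theorem stmt_18 (G : MultiGraph) (χ : Fin G.nE → ℚ)
    (hχ : χ ∈ CharOf (1 : Matrix (Fin G.nE) (Fin G.nE) ℤ) G.cutSet) :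
    χ ∈ ShortOf (1 : Matrix (Fin G.nE) (Fin G.nE) ℤ) G.cutSet ↔
      ∃ s : Fin G.nE → ℚ, (∀ e, s e = 1 ∨ s e = -1) ∧
        ∀ y ∈ G.cutSet, qform (1 : Matrix (Fin G.nE) (Fin G.nE) ℤ) χ y
          = qform (1 : Matrix (Fin G.nE) (Fin G.nE) ℤ) s y := by
  classical
  constructor
  · -- short → orientation covector
    intro hshort
    choose bb hb using fun v => G18.char_vertex hχ v
    have hsumq : ∑ v, (bb v : ℚ) = 0 := by
      have h1 : ∑ v, G.bndry χ v = 0 := G18.bndry_sum_zero χ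
      have h2 : ∑ v, G.bndry (fun _ => (1:ℚ)) v = 0 := G18.bndry_sum_zero _
      have h3 : ∑ v, G.bndry χ v
          = ∑ v, G.bndry (fun _ => (1:ℚ)) v - 2 * ∑ v, (bb v : ℚ) := by
        rw [Finset.mul_sum, ← Finset.sum_sub_distrib]
        exact Finset.sum_congr rfl fun v _ => hb v
      rw [h1, h2] at h3
      linarith
    have hsum : ∑ v, bb v = 0 := by exact_mod_cast hsumq
    have hshort' : ∀ y ∈ G.cutSet, 0 ≤ (∑ e, χ e * y e) + ∑ e, y e * y e := by
      intro y hy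
      have h := hshort.2 _ (G18.char_shift hχ hy) ⟨y, hy, rfl⟩
      rw [G18.qform_sq_expand] at h
      linarith
    have hcut : ∀ R : Finset (Fin G.nV),
        -(((Finset.univ.filter (fun e => G.tl e ∈ R ∧ G.hd e ∉ R)).card : ℤ))
          ≤ ∑ v ∈ R, bb v := by
      intro R
      have h0 : 0 ≤ (∑ e, χ e * ((if G.tl e ∈ R then (1:ℚ) else 0)
            - (if G.hd e ∈ R then 1 else 0)))
          + ∑ e, ((if G.tl e ∈ R then (1:ℚ) else 0) - (if G.hd e ∈ R then 1 else 0))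
            * ((if G.tl e ∈ R then (1:ℚ) else 0) - (if G.hd e ∈ R then 1 else 0)) :=
        hshort' _ (G18.yR_mem R)
      have h1 : ∑ e, χ e * ((if G.tl e ∈ R then (1:ℚ) else 0)
            - (if G.hd e ∈ R then 1 else 0))
          = -∑ v ∈ R, G.bndry χ v := by
        rw [G18.sum_bndry, ← Finset.sum_neg_distrib]
        exact Finset.sum_congr rfl fun e _ => by ring
      have h2 : ∑ e, ((if G.tl e ∈ R then (1:ℚ) else 0) - (if G.hd e ∈ R then 1 else 0))
            * ((if G.tl e ∈ R then (1:ℚ) else 0) - (if G.hd e ∈ R then 1 else 0))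
          = ((Finset.univ.filter (fun e => G.hd e ∈ R ∧ G.tl e ∉ R)).card : ℚ)
            + ((Finset.univ.filter (fun e => G.tl e ∈ R ∧ G.hd e ∉ R)).card : ℚ) := by
        have hper : ∀ e ∈ (Finset.univ : Finset (Fin G.nE)),
            ((if G.tl e ∈ R then (1:ℚ) else 0) - (if G.hd e ∈ R then 1 else 0))
              * ((if G.tl e ∈ R then (1:ℚ) else 0) - (if G.hd e ∈ R then 1 else 0))
            = (if G.hd e ∈ R ∧ G.tl e ∉ R then (1:ℚ) else 0)
              + (if G.tl e ∈ R ∧ G.hd e ∉ R then (1:ℚ) else 0) := by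
          intro e _
          by_cases hh : G.hd e ∈ R <;> by_cases ht : G.tl e ∈ R <;> simp [hh, ht]
        rw [Finset.sum_congr rfl hper, Finset.sum_add_distrib,
          Finset.sum_boole, Finset.sum_boole]
      have h3 : ∑ v ∈ R, G.bndry (fun _ => (1:ℚ)) v
          = ((Finset.univ.filter (fun e => G.hd e ∈ R ∧ G.tl e ∉ R)).card : ℚ)
            - ((Finset.univ.filter (fun e => G.tl e ∈ R ∧ G.hd e ∉ R)).card : ℚ) := by
        rw [G18.sum_bndry]
        have hper : ∀ e ∈ (Finset.univ : Finset (Fin G.nE)),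
            (fun _ => (1:ℚ)) e * ((if G.hd e ∈ R then (1:ℚ) else 0)
              - (if G.tl e ∈ R then 1 else 0))
            = (if G.hd e ∈ R ∧ G.tl e ∉ R then (1:ℚ) else 0)
              - (if G.tl e ∈ R ∧ G.hd e ∉ R then (1:ℚ) else 0) := by
          intro e _
          by_cases hh : G.hd e ∈ R <;> by_cases ht : G.tl e ∈ R <;> simp [hh, ht]
        rw [Finset.sum_congr rfl hper, Finset.sum_sub_distrib,
          Finset.sum_boole, Finset.sum_boole]
      have h4 : ∑ v ∈ R, G.bndry χ v
          = ∑ v ∈ R, G.bndry (fun _ => (1:ℚ)) v - 2 * ∑ v ∈ R, (bb v : ℚ) := by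
        rw [Finset.mul_sum, ← Finset.sum_sub_distrib]
        exact Finset.sum_congr rfl fun v _ => hb v
      have hfin : -(((Finset.univ.filter (fun e => G.tl e ∈ R ∧ G.hd e ∉ R)).card : ℚ))
          ≤ ∑ v ∈ R, (bb v : ℚ) := by
        rw [h1, h2] at h0
        rw [h3] at h4
        linarith
      exact_mod_cast hfin
    obtain ⟨z, hz⟩ := G18.flow_exists bb hsum hcut
    refine ⟨fun e => if z e then -1 else 1, fun e => ?_, ?_⟩
    · by_cases h : z e <;> simp [h]
    · refine G18.bndry_eq_qform_iff ?_
      intro v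
      have hcast : ((G18.dz G z v : ℤ) : ℚ)
          = ∑ e, (if z e then (1:ℚ) else 0)
            * ((if G.hd e = v then 1 else 0) - (if G.tl e = v then 1 else 0)) := by
        rw [G18.dz]
        push_cast [apply_ite (fun (x : ℤ) => (x : ℚ)), G18.zv]
        rfl
      have hs : G.bndry (fun e => if z e then (-1:ℚ) else 1) v
          = G.bndry (fun _ => (1:ℚ)) v - 2 * ((G18.dz G z v : ℤ) : ℚ) := by
        rw [MultiGraph.bndry, MultiGraph.bndry, hcast, Finset.mul_sum,
          ← Finset.sum_sub_distrib]
        refine Finset.sum_congr rfl fun e _ => ?_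
        show (if z e then (-1:ℚ) else 1) * ((if G.hd e = v then 1 else 0)
            - (if G.tl e = v then 1 else 0))
          = (fun _ => (1:ℚ)) e * ((if G.hd e = v then 1 else 0)
            - (if G.tl e = v then 1 else 0))
            - 2 * ((if z e then (1:ℚ) else 0) * ((if G.hd e = v then 1 else 0)
              - (if G.tl e = v then 1 else 0)))
        by_cases h : z e <;> simp [h] <;> ring
      rw [hb v, hs, hz v]
  · -- orientation covector → short
    rintro ⟨s, hs1, hs2⟩
    refine ⟨hχ, ?_⟩
    rintro χ' hχ' ⟨y, hy, rfl⟩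
    rw [G18.qform_sq_expand]
    have hsy : ∑ e, χ e * y e = ∑ e, s e * y e := by
      have h := hs2 y hy
      rw [G18.qform_one, G18.qform_one] at h
      exact h
    have key : 0 ≤ (∑ e, s e * y e) + ∑ e, y e * y e := by
      rw [← Finset.sum_add_distrib]
      refine Finset.sum_nonneg fun e _ => ?_
      obtain ⟨m, hm⟩ := hy.1 e
      rcases hs1 e with h | h <;> rw [h, hm]
      · have hz : (0:ℤ) ≤ 1 * m + m * m := by
          rcases le_or_gt 0 m with h0 | h0
          · nlinarith
          · have h1 : m + 1 ≤ 0 := h0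
            nlinarith
        exact_mod_cast hz
      · have hz : (0:ℤ) ≤ -1 * m + m * m := by
          rcases le_or_gt 0 m with h0 | h0
          · have h1 : (1:ℤ) ≤ m ∨ m = 0 := by omega
            rcases h1 with h1 | rfl
            · nlinarith
            · nlinarith
          · nlinarith
        exact_mod_cast hz
    linarith

end Greene
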